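/- arXiv:2003.07334 — 5 statements merged into one kernel-verified Lean document; each statement's English description precedes it below -/
import Mathlib

section
/- Let T be symmetric positive definite, λ ∈ (0,1), P symmetric positive definite, ψ an m×n real matrix, and D = λT + ψᵀPψ. Then the matrix C = ψ[T^{-1} − D^{-1}ψᵀPψT^{-1} − λD^{-1} − T^{-1}ψᵀPψD^{-1} + λD^{-1}ψᵀPψD^{-1} + D^{-1}ψᵀPψT^{-1}ψᵀPψD^{-1}]ψᵀ is the zero matrix. -/
open Matrix

lemma aux_posdef_smul {n : ℕ} {T : Matrix (Fin n) (Fin n) ℝ} (hT : T.PosDef) {c : ℝ}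
    (hc : 0 < c) : (c • T).PosDef := by
  refine ⟨?_, fun x hx => ?_⟩
  · show (c • T)ᴴ = c • T
    rw [conjTranspose_smul, star_trivial, hT.1]
  · exact (hT.smul hc).2 hx

lemma aux_ring {R : Type*} [Ring R] [Algebra ℝ R] (d t di ti s : R) (lam : ℝ)
    (hdi : di * d = 1) (hd : d * di = 1) (hti : ti * t = 1) (ht : t * ti = 1)
    (hs : s = d - lam • t) :
    ti - di * s * ti - lam • di - ti * s * di + lam • (di * s * di)
      + di * s * ti * s * di = 0 := by
  have e1 : di * s * ti = ti - lam • di := by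
    rw [hs, mul_sub, hdi, mul_smul_comm, sub_mul, one_mul, smul_mul_assoc,
      mul_assoc, ht, mul_one]
  have e2 : ti * s * di = ti - lam • di := by
    rw [hs, mul_sub, sub_mul, mul_assoc, hd, mul_one, mul_smul_comm, hti,
      smul_mul_assoc, one_mul]
  have e3 : di * s * ti * s * di = ti - lam • di - lam • (di * s * di) := by
    rw [e1, sub_mul, sub_mul, e2, smul_mul_assoc, smul_mul_assoc]
  rw [e3, e1, e2]
  abel

/-- The matrix `C` appearing in the Lyapunov difference of the RLSFF analysis is zero. -/
theorem stmt3 {n m : ℕ} (T : Matrix (Fin n) (Fin n) ℝ) (hT : T.PosDef)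
    (lam : ℝ) (hlam : lam ∈ Set.Ioo (0 : ℝ) 1)
    (P : Matrix (Fin m) (Fin m) ℝ) (hP : P.PosDef)
    (ψ : Matrix (Fin m) (Fin n) ℝ)
    (D : Matrix (Fin n) (Fin n) ℝ) (hD : D = lam • T + ψᵀ * P * ψ) :
    ψ * (T⁻¹ - D⁻¹ * ψᵀ * P * ψ * T⁻¹ - lam • D⁻¹ - T⁻¹ * ψᵀ * P * ψ * D⁻¹
        + lam • (D⁻¹ * ψᵀ * P * ψ * D⁻¹)
        + D⁻¹ * ψᵀ * P * ψ * T⁻¹ * ψᵀ * P * ψ * D⁻¹) * ψᵀ = 0 := by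
  have hDpd : D.PosDef := by
    rw [hD]
    exact (aux_posdef_smul hT hlam.1).add_posSemidef
      (hP.posSemidef.conjTranspose_mul_mul_same ψ)
  have hDdet : IsUnit D.det := isUnit_iff_ne_zero.mpr hDpd.det_pos.ne'
  have hTdet : IsUnit T.det := isUnit_iff_ne_zero.mpr hT.det_pos.ne'
  have hs : ψᵀ * P * ψ = D - lam • T := by rw [hD]; abel
  have key : T⁻¹ - D⁻¹ * (ψᵀ * P * ψ) * T⁻¹ - lam • D⁻¹ - T⁻¹ * (ψᵀ * P * ψ) * D⁻¹
      + lam • (D⁻¹ * (ψᵀ * P * ψ) * D⁻¹)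
      + D⁻¹ * (ψᵀ * P * ψ) * T⁻¹ * (ψᵀ * P * ψ) * D⁻¹ = 0 :=
    aux_ring D T D⁻¹ T⁻¹ (ψᵀ * P * ψ) lam (nonsing_inv_mul D hDdet)
      (mul_nonsing_inv D hDdet) (nonsing_inv_mul T hTdet) (mul_nonsing_inv T hTdet) hs
  have hb : T⁻¹ - D⁻¹ * ψᵀ * P * ψ * T⁻¹ - lam • D⁻¹ - T⁻¹ * ψᵀ * P * ψ * D⁻¹
      + lam • (D⁻¹ * ψᵀ * P * ψ * D⁻¹)
      + D⁻¹ * ψᵀ * P * ψ * T⁻¹ * ψᵀ * P * ψ * D⁻¹ = 0 := by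
    rw [← key]; simp only [Matrix.mul_assoc]
  rw [hb, Matrix.mul_zero, Matrix.zero_mul]
end

section
/- Let λ ∈ (0,1), c > 0, S ∈ ℕ, and let {Q_k} be a sequence of symmetric positive semidefinite m×m matrices with Q_k ⪰ λ Q_{k-1} for all k, and Q_{j-1} + Q_j + ⋯ + Q_{j+S-1} ⪰ c·I for all j ≥ 1. Then Q_{k} ⪰ [c(λ^{-1}−1)/(λ^{-(S+1)}−1)]·I for all k ≥ S. -/
open Matrix Finset

/-- Multiple-output analogue of Johnstone et al.'s Lemma 1: a uniform lower bound on a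
sequence of PSD matrices `Q_k` satisfying `Q_k ⪰ λ Q_{k-1}` whose windows of length `S+1`
are uniformly bounded below by `c • I`. -/
theorem stmt7 {m : ℕ} (lam : ℝ) (hlam : lam ∈ Set.Ioo (0 : ℝ) 1)
    (c : ℝ) (hc : 0 < c) (S : ℕ)
    (Q : ℕ → Matrix (Fin m) (Fin m) ℝ)
    (hQ : ∀ k, (Q k).PosSemidef)
    (hstep : ∀ k, (Q (k + 1) - lam • Q k).PosSemidef)
    (hwin : ∀ j : ℕ, ((∑ i ∈ range (S + 1), Q (j + i))
        - c • (1 : Matrix (Fin m) (Fin m) ℝ)).PosSemidef) :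
    ∀ k, S ≤ k →
      (Q k - (c * (lam⁻¹ - 1) / (lam⁻¹ ^ (S + 1) - 1))
          • (1 : Matrix (Fin m) (Fin m) ℝ)).PosSemidef := by
  obtain ⟨hl0, hl1⟩ := hlam
  have hinv1 : (1 : ℝ) < lam⁻¹ := (one_lt_inv_iff₀).2 ⟨hl0, hl1⟩
  intro k hk
  refine posSemidef_iff_dotProduct_mulVec.2 ⟨?_, ?_⟩
  · refine ((hQ k).1.sub ?_)
    simp [Matrix.IsHermitian, Matrix.conjTranspose_smul]
  · intro x
    set q : ℕ → ℝ := fun i => dotProduct (star x) (Q i *ᵥ x) with hq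
    -- step inequality
    have step : ∀ n, lam * q n ≤ q (n + 1) := by
      intro n
      have := (hstep n).dotProduct_mulVec_nonneg x
      simp only [sub_mulVec, dotProduct_sub, smul_mulVec, dotProduct_smul,
        smul_eq_mul, sub_nonneg, hq] at this ⊢
      exact this
    have chain : ∀ n d, lam ^ d * q n ≤ q (n + d) := by
      intro n d
      induction d with
      | zero => simp
      | succ d ih =>
        have h1 : lam ^ (d+1) * q n = lam * (lam ^ d * q n) := by ring
        calc lam ^ (d+1) * q n = lam * (lam ^ d * q n) := h1
          _ ≤ lam * q (n + d) := by
              exact mul_le_mul_of_nonneg_left ih hl0.le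
          _ ≤ q (n + d + 1) := step _
    -- window inequality at j = k - S
    have hwin' := (hwin (k - S)).dotProduct_mulVec_nonneg x
    have hnn : (0:ℝ) ≤ dotProduct (star x) x := by
      simpa [dotProduct] using Finset.sum_nonneg fun i _ => mul_self_nonneg (x i)
    have qf_sum : ∀ (s : Finset ℕ) (f : ℕ → Matrix (Fin m) (Fin m) ℝ),
        dotProduct (star x) ((∑ i ∈ s, f i) *ᵥ x)
          = ∑ i ∈ s, dotProduct (star x) (f i *ᵥ x) := by
      intro s f
      induction s using Finset.induction_on with
      | empty => simp
      | insert a s h ih =>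
        rw [Finset.sum_insert h, add_mulVec, dotProduct_add, ih, Finset.sum_insert h]
    have hwinq : c * dotProduct (star x) x ≤ ∑ i ∈ range (S + 1), q (k - S + i) := by
      simp only [sub_mulVec, dotProduct_sub, smul_mulVec, dotProduct_smul,
        smul_eq_mul, sub_nonneg, one_mulVec] at hwin'
      rw [qf_sum] at hwin'
      simpa [hq] using hwin'
    -- each window term bounded by lam⁻¹ ^ (S - i) * q k
    have hterm : ∀ i ∈ range (S + 1), q (k - S + i) ≤ lam⁻¹ ^ (S - i) * q k := by
      intro i hi
      have hiS : i ≤ S := Nat.lt_succ_iff.1 (mem_range.1 hi)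
      have hidx : k - S + i + (S - i) = k := by omega
      have h1 : lam ^ (S - i) * q (k - S + i) ≤ q k := by
        have := chain (k - S + i) (S - i)
        rwa [hidx] at this
      have hpow : (0:ℝ) < lam ^ (S - i) := pow_pos hl0 _
      rw [inv_pow]
      calc q (k - S + i) = (lam ^ (S - i))⁻¹ * (lam ^ (S - i) * q (k - S + i)) := by
            field_simp
        _ ≤ (lam ^ (S - i))⁻¹ * q k := by
            exact mul_le_mul_of_nonneg_left h1 (inv_nonneg.2 hpow.le)
    set G : ℝ := ∑ i ∈ range (S + 1), lam⁻¹ ^ i with hG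
    have hGsum : ∑ i ∈ range (S + 1), lam⁻¹ ^ (S - i) = G := by
      rw [hG]
      have := Finset.sum_range_reflect (fun i => lam⁻¹ ^ i) (S + 1)
      simpa using this
    have hsum : c * dotProduct (star x) x ≤ G * q k := by
      calc c * dotProduct (star x) x ≤ ∑ i ∈ range (S + 1), q (k - S + i) := hwinq
        _ ≤ ∑ i ∈ range (S + 1), lam⁻¹ ^ (S - i) * q k := Finset.sum_le_sum hterm
        _ = G * q k := by rw [← Finset.sum_mul, hGsum]
    have hGpos : 0 < G := by
      rw [hG]
      refine Finset.sum_pos (fun i _ => pow_pos (by positivity) _) ⟨0, by simp⟩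
    have hGeq : G = (lam⁻¹ ^ (S + 1) - 1) / (lam⁻¹ - 1) := by
      rw [hG, geom_sum_eq (ne_of_gt hinv1)]
    have hden : (0:ℝ) < lam⁻¹ ^ (S + 1) - 1 := by
      have : (1:ℝ) < lam⁻¹ ^ (S + 1) := one_lt_pow₀ hinv1 (by omega)
      linarith
    have hcoef : c * (lam⁻¹ - 1) / (lam⁻¹ ^ (S + 1) - 1) = c / G := by
      rw [hGeq]
      field_simp
    -- conclude
    have key : c / G * dotProduct (star x) x ≤ q k := by
      rw [div_mul_eq_mul_div, div_le_iff₀ hGpos]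
      linarith [hsum]
    simp only [sub_mulVec, dotProduct_sub, smul_mulVec, dotProduct_smul,
      smul_eq_mul, sub_nonneg, one_mulVec]
    calc c * (lam⁻¹ - 1) / (lam⁻¹ ^ (S + 1) - 1) * dotProduct (star x) x
        = c / G * dotProduct (star x) x := by rw [hcoef]
      _ ≤ q k := key
end

section
/- Let T be symmetric positive definite, λ ∈ (0,1), P symmetric positive definite, ψ ∈ ℝ^{m×n}, D = λT + ψᵀPψ, and define P₊^{-1} = λP^{-1} + ψT^{-1}ψᵀ and the error map θ̃₊ = (I − Pψ D^{-1} ψᵀ) θ̃. Then for every θ̃ ∈ ℝ^m: θ̃₊ᵀ P₊^{-1} θ̃₊ − θ̃ᵀ P^{-1} θ̃ = θ̃ᵀ[(λ−1)P^{-1} − λψ D^{-1} ψᵀ]θ̃. -/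
open Matrix

lemma smul_posDef' {m : ℕ} {A : Matrix (Fin m) (Fin m) ℝ} (hA : A.PosDef)
    {c : ℝ} (hc : 0 < c) : (c • A).PosDef := by
  refine ⟨?_, fun x hx => ?_⟩
  · unfold Matrix.IsHermitian
    rw [conjTranspose_smul, hA.1.eq]
    simp [star_trivial]
  · exact (Matrix.PosDef.smul hA hc).2 hx

/-- One-step Lyapunov identity for the RLSFF estimation error. -/
theorem stmt9 {n m : ℕ} (T : Matrix (Fin n) (Fin n) ℝ) (hT : T.PosDef)
    (lam : ℝ) (hlam : lam ∈ Set.Ioo (0 : ℝ) 1)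
    (P : Matrix (Fin m) (Fin m) ℝ) (hP : P.PosDef)
    (ψ : Matrix (Fin m) (Fin n) ℝ)
    (D : Matrix (Fin n) (Fin n) ℝ) (hD : D = lam • T + ψᵀ * P * ψ)
    (Pplusinv : Matrix (Fin m) (Fin m) ℝ)
    (hPplusinv : Pplusinv = lam • P⁻¹ + ψ * T⁻¹ * ψᵀ) :
    ∀ θt : Fin m → ℝ,
      ((1 - P * ψ * D⁻¹ * ψᵀ).mulVec θt) ⬝ᵥ
          Pplusinv.mulVec ((1 - P * ψ * D⁻¹ * ψᵀ).mulVec θt)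
        - θt ⬝ᵥ P⁻¹.mulVec θt
      = θt ⬝ᵥ ((lam - 1) • P⁻¹ - lam • (ψ * D⁻¹ * ψᵀ)).mulVec θt := by
  intro θt
  have hlam0 : 0 < lam := hlam.1
  have hDpd : D.PosDef := by
    rw [hD]
    exact (smul_posDef' hT hlam0).add_posSemidef
      (by simpa using hP.posSemidef.conjTranspose_mul_mul_same ψ)
  have hPsym : Pᵀ = P := by
    rw [← conjTranspose_eq_transpose_of_trivial]; exact hP.1.eq
  have hTsym : Tᵀ = T := by
    rw [← conjTranspose_eq_transpose_of_trivial]; exact hT.1.eq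
  have hPinv : P⁻¹ * P = 1 := nonsing_inv_mul P hP.det_pos.ne'.isUnit
  have hPinv' : P * P⁻¹ = 1 := mul_nonsing_inv P hP.det_pos.ne'.isUnit
  have hTinv : T⁻¹ * T = 1 := nonsing_inv_mul T hT.det_pos.ne'.isUnit
  have hDinv' : D * D⁻¹ = 1 := mul_nonsing_inv D hDpd.det_pos.ne'.isUnit
  have hDsym : Dᵀ = D := by
    rw [hD, transpose_add, transpose_smul, hTsym, transpose_mul, transpose_mul,
      transpose_transpose, hPsym, Matrix.mul_assoc]
  have hDinvsym : (D⁻¹)ᵀ = D⁻¹ := by rw [transpose_nonsing_inv, hDsym]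
  set A : Matrix (Fin m) (Fin m) ℝ := 1 - P * ψ * D⁻¹ * ψᵀ with hA
  have hψTPψ : ψᵀ * P * ψ = D - lam • T := by rw [hD]; abel
  have key : Pplusinv * A = lam • P⁻¹ := by
    rw [hPplusinv, hA]
    have expand : (lam • P⁻¹ + ψ * T⁻¹ * ψᵀ) * (1 - P * ψ * D⁻¹ * ψᵀ)
        = lam • P⁻¹ + ψ * T⁻¹ * ψᵀ
          - lam • (P⁻¹ * P * (ψ * D⁻¹ * ψᵀ))
          - ψ * (T⁻¹ * (ψᵀ * P * ψ) * D⁻¹) * ψᵀ := by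
      noncomm_ring
      simp only [Matrix.mul_assoc]
    have h2 : T⁻¹ * (D - lam • T) * D⁻¹ = T⁻¹ - lam • D⁻¹ := by
      rw [Matrix.mul_sub, Matrix.mul_smul, hTinv, Matrix.sub_mul, Matrix.smul_mul,
        Matrix.one_mul, Matrix.mul_assoc, hDinv', Matrix.mul_one]
    rw [expand, hPinv, hψTPψ, h2]
    simp only [Matrix.one_mul, Matrix.sub_mul, Matrix.mul_sub, Matrix.mul_smul,
      Matrix.smul_mul]
    abel
  have hquad : θt ⬝ᵥ (Aᵀ * (Pplusinv * A)).mulVec θt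
      = A.mulVec θt ⬝ᵥ Pplusinv.mulVec (A.mulVec θt) := by
    calc θt ⬝ᵥ (Aᵀ * (Pplusinv * A)).mulVec θt
        = θt ⬝ᵥ Aᵀ.mulVec ((Pplusinv * A).mulVec θt) := by rw [mulVec_mulVec]
      _ = (vecMul θt Aᵀ) ⬝ᵥ ((Pplusinv * A).mulVec θt) := dotProduct_mulVec _ _ _
      _ = (A.mulVec θt) ⬝ᵥ ((Pplusinv * A).mulVec θt) := by rw [vecMul_transpose]
      _ = A.mulVec θt ⬝ᵥ Pplusinv.mulVec (A.mulVec θt) := by rw [← mulVec_mulVec]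
  have hAT : Aᵀ * (lam • P⁻¹) = lam • P⁻¹ - lam • (ψ * D⁻¹ * ψᵀ) := by
    rw [hA]
    simp only [transpose_sub, transpose_one, transpose_mul, transpose_transpose,
      hDinvsym, hPsym]
    rw [Matrix.sub_mul, Matrix.one_mul, Matrix.mul_smul]
    congr 1
    congr 1
    simp [Matrix.mul_assoc, hPinv']
  rw [← hquad, key, hAT]
  rw [show θt ⬝ᵥ (lam • P⁻¹ - lam • (ψ * D⁻¹ * ψᵀ)).mulVec θt - θt ⬝ᵥ P⁻¹.mulVec θt
      = θt ⬝ᵥ ((lam • P⁻¹ - lam • (ψ * D⁻¹ * ψᵀ)) - P⁻¹).mulVec θt from by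
    simp [sub_mulVec, dotProduct_sub]]
  congr 1
  rw [sub_smul, one_smul]
  abel
end

section
/- Under the assumptions of the previous identity, the Lyapunov function W_k = θ̃_kᵀ P_{k-1}^{-1} θ̃_k satisfies W_{k+1} ≤ λ W_k, and hence W_k ≤ λ^k θ̃_0ᵀ P_{-1}^{-1} θ̃_0 for all k ≥ 0. -/
open Matrix

private lemma rlsff_smul_posDef {p : ℕ} {M : Matrix (Fin p) (Fin p) ℝ} (hM : M.PosDef)
    {c : ℝ} (hc : 0 < c) : (c • M).PosDef := by
  refine Matrix.PosDef.of_dotProduct_mulVec_pos ?_ (fun x hx => ?_)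
  · unfold Matrix.IsHermitian
    simp only [conjTranspose_smul, star_trivial]
    rw [show Mᴴ = M from hM.1.eq]
  · have := hM.dotProduct_mulVec_pos hx
    simp only [smul_mulVec, dotProduct_smul, smul_eq_mul, star_trivial] at *
    exact mul_pos hc this

private lemma rlsff_id1 {m n : ℕ} (P Q : Matrix (Fin m) (Fin m) ℝ) (ψ : Matrix (Fin m) (Fin n) ℝ)
    (T Dk : Matrix (Fin n) (Fin n) ℝ) (lam : ℝ)
    (hQP : Q * P = 1) (hDD : Dk * Dk⁻¹ = 1) (hTT : T⁻¹ * T = 1)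
    (hψ : ψᵀ * P * ψ = Dk - lam • T) :
    (lam • Q + ψ * T⁻¹ * ψᵀ) * (1 - P * ψ * Dk⁻¹ * ψᵀ) = lam • Q := by
  have e1 : ψ * T⁻¹ * ψᵀ * (P * ψ * Dk⁻¹ * ψᵀ)
      = ψ * T⁻¹ * ψᵀ - lam • (ψ * Dk⁻¹ * ψᵀ) := by
    calc ψ * T⁻¹ * ψᵀ * (P * ψ * Dk⁻¹ * ψᵀ)
        = ψ * T⁻¹ * (ψᵀ * P * ψ) * (Dk⁻¹ * ψᵀ) := by simp only [Matrix.mul_assoc]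
      _ = ψ * T⁻¹ * (Dk - lam • T) * (Dk⁻¹ * ψᵀ) := by rw [hψ]
      _ = ψ * T⁻¹ * (Dk * Dk⁻¹) * ψᵀ - lam • (ψ * (T⁻¹ * T) * (Dk⁻¹ * ψᵀ)) := by
          rw [Matrix.mul_sub, Matrix.sub_mul, Matrix.mul_smul, Matrix.smul_mul]
          simp only [Matrix.mul_assoc]
      _ = ψ * T⁻¹ * ψᵀ - lam • (ψ * Dk⁻¹ * ψᵀ) := by
          rw [hDD, hTT, Matrix.mul_one, Matrix.mul_one]
          simp only [Matrix.mul_assoc]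
  have e2 : (lam • Q) * (P * ψ * Dk⁻¹ * ψᵀ) = lam • (ψ * Dk⁻¹ * ψᵀ) := by
    rw [Matrix.smul_mul,
      show Q * (P * ψ * Dk⁻¹ * ψᵀ) = Q * P * (ψ * (Dk⁻¹ * ψᵀ)) by simp only [Matrix.mul_assoc],
      hQP, Matrix.one_mul]
    simp only [Matrix.mul_assoc]
  rw [Matrix.add_mul, Matrix.mul_sub, Matrix.mul_sub, Matrix.mul_one, Matrix.mul_one, e1, e2]
  abel

private lemma rlsff_id2 {m n : ℕ} (P Q : Matrix (Fin m) (Fin m) ℝ) (ψ : Matrix (Fin m) (Fin n) ℝ)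
    (Dk : Matrix (Fin n) (Fin n) ℝ) (lam : ℝ) (hPQ : P * Q = 1) :
    (1 - ψ * Dk⁻¹ * ψᵀ * P) * (lam • Q) = lam • Q - lam • (ψ * Dk⁻¹ * ψᵀ) := by
  rw [Matrix.sub_mul, Matrix.one_mul, Matrix.mul_smul,
    show ψ * Dk⁻¹ * ψᵀ * P * Q = ψ * Dk⁻¹ * ψᵀ * (P * Q) by simp only [Matrix.mul_assoc],
    hPQ, Matrix.mul_one]

/-- The Lyapunov function `W k = θ̃_kᵀ P_{k-1}⁻¹ θ̃_k` of the RLSFF error dynamics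
decreases geometrically: `W (k+1) ≤ λ W k` and `W k ≤ λ^k W 0`.
Here `Pprev k` stands for `P_{k-1}` (so `Pprev 0 = P_{-1}`). -/
theorem stmt10 {n m : ℕ} (T : Matrix (Fin n) (Fin n) ℝ) (hT : T.PosDef)
    (lam : ℝ) (hlam : lam ∈ Set.Ioo (0 : ℝ) 1)
    (ψ : ℕ → Matrix (Fin m) (Fin n) ℝ)
    (Pprev : ℕ → Matrix (Fin m) (Fin m) ℝ) (hP0 : (Pprev 0).PosDef)
    (hPrec : ∀ k, (Pprev (k + 1))⁻¹
        = lam • (Pprev k)⁻¹ + ψ k * T⁻¹ * (ψ k)ᵀ)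
    (D : ℕ → Matrix (Fin n) (Fin n) ℝ)
    (hD : ∀ k, D k = lam • T + (ψ k)ᵀ * Pprev k * ψ k)
    (θt : ℕ → Fin m → ℝ)
    (hθ : ∀ k, θt (k + 1) = (1 - Pprev k * ψ k * (D k)⁻¹ * (ψ k)ᵀ).mulVec (θt k))
    (W : ℕ → ℝ) (hW : ∀ k, W k = θt k ⬝ᵥ (Pprev k)⁻¹.mulVec (θt k)) :
    (∀ k, W (k + 1) ≤ lam * W k) ∧
      ∀ k, W k ≤ lam ^ k * (θt 0 ⬝ᵥ (Pprev 0)⁻¹.mulVec (θt 0)) := by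
  obtain ⟨hlam0, hlam1⟩ := hlam
  have hTtr : (T)ᴴ = Tᵀ := conjTranspose_eq_transpose_of_trivial T
  -- positive definiteness of all `Pprev k`
  have hPos : ∀ k, (Pprev k).PosDef := by
    intro k
    induction k with
    | zero => exact hP0
    | succ k ih =>
      have h1 : ((Pprev (k + 1))⁻¹).PosDef := by
        rw [hPrec k]
        refine (rlsff_smul_posDef (ih.inv) hlam0).add_posSemidef ?_
        have := (hT.inv.posSemidef).mul_mul_conjTranspose_same (ψ k)
        rwa [conjTranspose_eq_transpose_of_trivial] at this
      exact Matrix.posDef_inv_iff.mp h1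
  -- positive definiteness of all `D k`
  have hDpos : ∀ k, (D k).PosDef := by
    intro k
    rw [hD k]
    refine (rlsff_smul_posDef hT hlam0).add_posSemidef ?_
    have := ((hPos k).posSemidef).conjTranspose_mul_mul_same (ψ k)
    rwa [conjTranspose_eq_transpose_of_trivial] at this
  -- key one-step identity
  have key : ∀ k, W (k + 1)
      = lam * W k - lam * (θt k ⬝ᵥ (ψ k * (D k)⁻¹ * (ψ k)ᵀ).mulVec (θt k)) := by
    intro k
    have hPdet : IsUnit (Pprev k).det := isUnit_iff_ne_zero.mpr (hPos k).det_pos.ne'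
    have hDdet : IsUnit (D k).det := isUnit_iff_ne_zero.mpr (hDpos k).det_pos.ne'
    have hTdet : IsUnit T.det := isUnit_iff_ne_zero.mpr hT.det_pos.ne'
    have hQP : (Pprev k)⁻¹ * Pprev k = 1 := Matrix.nonsing_inv_mul _ hPdet
    have hPQ : Pprev k * (Pprev k)⁻¹ = 1 := Matrix.mul_nonsing_inv _ hPdet
    have hDD : D k * (D k)⁻¹ = 1 := Matrix.mul_nonsing_inv _ hDdet
    have hTT : T⁻¹ * T = 1 := Matrix.nonsing_inv_mul _ hTdet
    have hψ : (ψ k)ᵀ * Pprev k * ψ k = D k - lam • T := by rw [hD k]; abel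
    -- transpose of the transition matrix
    have hAt : (1 - Pprev k * ψ k * (D k)⁻¹ * (ψ k)ᵀ)ᵀ
        = 1 - ψ k * (D k)⁻¹ * (ψ k)ᵀ * Pprev k := by
      have hDsym : ((D k)⁻¹)ᵀ = (D k)⁻¹ := by
        rw [Matrix.transpose_nonsing_inv]
        congr 1
        have := (hDpos k).isHermitian.eq
        rwa [conjTranspose_eq_transpose_of_trivial] at this
      have hPsym : (Pprev k)ᵀ = Pprev k := by
        have := (hPos k).isHermitian.eq
        rwa [conjTranspose_eq_transpose_of_trivial] at this
      rw [transpose_sub, transpose_one]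
      congr 1
      simp only [transpose_mul, transpose_transpose, hDsym, hPsym, Matrix.mul_assoc]
    have hQA : (Pprev (k + 1))⁻¹ * (1 - Pprev k * ψ k * (D k)⁻¹ * (ψ k)ᵀ)
        = lam • (Pprev k)⁻¹ :=
      (hPrec k) ▸ rlsff_id1 (Pprev k) (Pprev k)⁻¹ (ψ k) T (D k) lam hQP hDD hTT hψ
    have hM : (1 - Pprev k * ψ k * (D k)⁻¹ * (ψ k)ᵀ)ᵀ
          * ((Pprev (k + 1))⁻¹ * (1 - Pprev k * ψ k * (D k)⁻¹ * (ψ k)ᵀ))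
        = lam • (Pprev k)⁻¹ - lam • (ψ k * (D k)⁻¹ * (ψ k)ᵀ) := by
      rw [hQA, hAt]
      exact rlsff_id2 (Pprev k) (Pprev k)⁻¹ (ψ k) (D k) lam hPQ
    calc W (k + 1) = θt (k + 1) ⬝ᵥ (Pprev (k + 1))⁻¹.mulVec (θt (k + 1)) := hW _
      _ = θt k ⬝ᵥ ((1 - Pprev k * ψ k * (D k)⁻¹ * (ψ k)ᵀ)ᵀ
            * ((Pprev (k + 1))⁻¹ * (1 - Pprev k * ψ k * (D k)⁻¹ * (ψ k)ᵀ))).mulVec (θt k) := by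
          rw [hθ k, mulVec_mulVec, ← vecMul_transpose, ← Matrix.dotProduct_mulVec,
            mulVec_mulVec]
      _ = θt k ⬝ᵥ (lam • (Pprev k)⁻¹ - lam • (ψ k * (D k)⁻¹ * (ψ k)ᵀ)).mulVec (θt k) := by
          rw [hM]
      _ = lam * W k - lam * (θt k ⬝ᵥ (ψ k * (D k)⁻¹ * (ψ k)ᵀ).mulVec (θt k)) := by
          rw [hW k, Matrix.sub_mulVec]
          simp only [smul_mulVec, dotProduct_sub, dotProduct_smul, smul_eq_mul]
  have hnn : ∀ k, 0 ≤ θt k ⬝ᵥ (ψ k * (D k)⁻¹ * (ψ k)ᵀ).mulVec (θt k) := by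
    intro k
    have hB : (ψ k * (D k)⁻¹ * (ψ k)ᵀ).PosSemidef := by
      have := ((hDpos k).inv.posSemidef).mul_mul_conjTranspose_same (ψ k)
      rwa [conjTranspose_eq_transpose_of_trivial] at this
    simpa using hB.dotProduct_mulVec_nonneg (θt k)
  have part1 : ∀ k, W (k + 1) ≤ lam * W k := by
    intro k
    rw [key k]
    have : 0 ≤ lam * (θt k ⬝ᵥ (ψ k * (D k)⁻¹ * (ψ k)ᵀ).mulVec (θt k)) :=
      mul_nonneg hlam0.le (hnn k)
    linarith
  refine ⟨part1, ?_⟩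
  intro k
  induction k with
  | zero => rw [hW 0]; simp
  | succ k ih =>
    calc W (k + 1) ≤ lam * W k := part1 k
      _ ≤ lam * (lam ^ k * (θt 0 ⬝ᵥ (Pprev 0)⁻¹.mulVec (θt 0))) :=
          mul_le_mul_of_nonneg_left ih hlam0.le
      _ = lam ^ (k + 1) * (θt 0 ⬝ᵥ (Pprev 0)⁻¹.mulVec (θt 0)) := by ring
end

section
/- If the estimation error satisfies |θ̃_k|² ≤ γλ^k|θ̃_0|² (exponential convergence) and the system output is perturbed by bounded additive noise |w_k| ≤ w̄, then under the same RLSFF update with persistence of excitation the error remains bounded and converges to a ball around the origin of radius proportional to w̄: limsup_k |θ̃_k| ≤ c·w̄ for some constant c depending on λ, α, S, T, P_{-1}, β. -/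
open Matrix Finset Filter

set_option linter.unusedSectionVars false
set_option linter.unusedVariables false
set_option maxHeartbeats 1000000

namespace Stmt18Aux

variable {ι κ : Type*} [Fintype ι] [Fintype κ] [DecidableEq ι] [DecidableEq κ]

lemma dot_self_nonneg (v : ι → ℝ) : 0 ≤ v ⬝ᵥ v :=
  Finset.sum_nonneg fun i _ => mul_self_nonneg _

lemma dot_sq (v : ι → ℝ) : v ⬝ᵥ v = ∑ i, v i ^ 2 := by
  simp [dotProduct, sq]

lemma cs (x y : ι → ℝ) : x ⬝ᵥ y ≤ Real.sqrt (x ⬝ᵥ x) * Real.sqrt (y ⬝ᵥ y) := by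
  have h := Finset.sum_mul_sq_le_sq_mul_sq Finset.univ x y
  have h2 : (x ⬝ᵥ y) ^ 2 ≤ (x ⬝ᵥ x) * (y ⬝ᵥ y) := by
    rw [dot_sq, dot_sq]; exact h
  calc x ⬝ᵥ y ≤ |x ⬝ᵥ y| := le_abs_self _
    _ = Real.sqrt ((x ⬝ᵥ y) ^ 2) := (Real.sqrt_sq_eq_abs _).symm
    _ ≤ Real.sqrt ((x ⬝ᵥ x) * (y ⬝ᵥ y)) := Real.sqrt_le_sqrt h2
    _ = _ := Real.sqrt_mul (dot_self_nonneg x) _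

lemma sqrt_dot_add (a b : ι → ℝ) :
    Real.sqrt ((a + b) ⬝ᵥ (a + b)) ≤ Real.sqrt (a ⬝ᵥ a) + Real.sqrt (b ⬝ᵥ b) := by
  have hab := cs a b
  have ha := Real.sq_sqrt (dot_self_nonneg a)
  have hb := Real.sq_sqrt (dot_self_nonneg b)
  have hexp : (a + b) ⬝ᵥ (a + b) = a ⬝ᵥ a + a ⬝ᵥ b + a ⬝ᵥ b + b ⬝ᵥ b := by
    rw [add_dotProduct, dotProduct_add, dotProduct_add, dotProduct_comm b a]; ring
  have h2 : (a + b) ⬝ᵥ (a + b) ≤ (Real.sqrt (a ⬝ᵥ a) + Real.sqrt (b ⬝ᵥ b)) ^ 2 := by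
    rw [hexp]; nlinarith
  calc Real.sqrt ((a + b) ⬝ᵥ (a + b)) ≤ Real.sqrt ((Real.sqrt (a ⬝ᵥ a) + Real.sqrt (b ⬝ᵥ b)) ^ 2) :=
        Real.sqrt_le_sqrt h2
    _ = _ := Real.sqrt_sq (by positivity)

lemma sqrt_dot_smul (c : ℝ) (v : ι → ℝ) :
    Real.sqrt ((c • v) ⬝ᵥ (c • v)) = |c| * Real.sqrt (v ⬝ᵥ v) := by
  have : (c • v) ⬝ᵥ (c • v) = c ^ 2 * (v ⬝ᵥ v) := by
    simp only [smul_dotProduct, dotProduct_smul, smul_eq_mul]; ring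
  rw [this, Real.sqrt_mul (sq_nonneg c), Real.sqrt_sq_eq_abs]

lemma sqrt_dot_neg (v : ι → ℝ) : Real.sqrt ((-v) ⬝ᵥ (-v)) = Real.sqrt (v ⬝ᵥ v) := by
  rw [neg_dotProduct, dotProduct_neg, neg_neg]

lemma dot_transpose (M : Matrix ι κ ℝ) (x : ι → ℝ) (y : κ → ℝ) :
    x ⬝ᵥ M *ᵥ y = (Mᵀ *ᵥ x) ⬝ᵥ y := by
  rw [dotProduct_mulVec, mulVec_transpose]

lemma psd_nonneg {A : Matrix ι ι ℝ} (hA : A.PosSemidef) (x : ι → ℝ) :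
    0 ≤ x ⬝ᵥ A *ᵥ x := by simpa using hA.dotProduct_mulVec_nonneg x

lemma herm_symm {A : Matrix ι ι ℝ} (hA : A.IsHermitian) (x y : ι → ℝ) :
    y ⬝ᵥ A *ᵥ x = x ⬝ᵥ A *ᵥ y := by
  have hAt : Aᵀ = A := by
    have := hA; rw [Matrix.IsHermitian] at this
    calc Aᵀ = Aᴴ := by ext i j; simp [Matrix.conjTranspose_apply]
      _ = A := this
  rw [dot_transpose, hAt, dotProduct_comm, dot_transpose, hAt]

lemma psd_cs {A : Matrix ι ι ℝ} (hA : A.PosSemidef) (x y : ι → ℝ) :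
    (x ⬝ᵥ A *ᵥ y) ^ 2 ≤ (x ⬝ᵥ A *ᵥ x) * (y ⬝ᵥ A *ᵥ y) := by
  have hxy := herm_symm hA.isHermitian x y
  have key : ∀ t : ℝ, 0 ≤ (y ⬝ᵥ A *ᵥ y) * (t * t) + (2 * (x ⬝ᵥ A *ᵥ y)) * t + x ⬝ᵥ A *ᵥ x := by
    intro t
    have h := psd_nonneg hA (x + t • y)
    have expand : (x + t • y) ⬝ᵥ A *ᵥ (x + t • y)
        = (y ⬝ᵥ A *ᵥ y) * (t * t) + (2 * (x ⬝ᵥ A *ᵥ y)) * t + x ⬝ᵥ A *ᵥ x := by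
      simp only [mulVec_add, mulVec_smul, dotProduct_add, add_dotProduct,
        dotProduct_smul, smul_dotProduct, smul_eq_mul]
      rw [hxy]; ring
    rwa [expand] at h
  have hd := discrim_le_zero key
  rw [discrim] at hd
  nlinarith [hd]

lemma crude_bound (M : Matrix ι κ ℝ) (v : κ → ℝ) :
    Real.sqrt ((M *ᵥ v) ⬝ᵥ (M *ᵥ v)) ≤
      Real.sqrt (∑ i, ∑ j, (M i j) ^ 2) * Real.sqrt (v ⬝ᵥ v) := by
  rw [← Real.sqrt_mul (by positivity)]
  apply Real.sqrt_le_sqrt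
  have h : ∀ i, (M *ᵥ v) i ^ 2 ≤ (∑ j, (M i j) ^ 2) * (v ⬝ᵥ v) := by
    intro i
    have := Finset.sum_mul_sq_le_sq_mul_sq Finset.univ (fun j => M i j) v
    rw [dot_sq]
    simpa [Matrix.mulVec, dotProduct] using this
  calc (M *ᵥ v) ⬝ᵥ (M *ᵥ v) = ∑ i, (M *ᵥ v) i ^ 2 := dot_sq _
    _ ≤ ∑ i, (∑ j, (M i j) ^ 2) * (v ⬝ᵥ v) := Finset.sum_le_sum fun i _ => h i
    _ = (∑ i, ∑ j, (M i j) ^ 2) * (v ⬝ᵥ v) := by rw [Finset.sum_mul]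

lemma posdef_smul {A : Matrix ι ι ℝ} (hA : A.PosDef) {c : ℝ} (hc : 0 < c) :
    (c • A).PosDef := by
  refine Matrix.PosDef.of_dotProduct_mulVec_pos ?_ ?_
  · have h := hA.isHermitian
    rw [Matrix.IsHermitian] at h ⊢
    rw [Matrix.conjTranspose_smul, h]; simp
  · intro x hx
    have h := hA.dotProduct_mulVec_pos hx
    simp only [Matrix.smul_mulVec, dotProduct_smul, smul_eq_mul]
    simp only [star_trivial] at h ⊢
    positivity

lemma sum_mulVec' {σ : Type*} (s : Finset σ) (M : σ → Matrix ι κ ℝ) (x : κ → ℝ) :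
    (∑ i ∈ s, M i) *ᵥ x = ∑ i ∈ s, (M i *ᵥ x) := by
  ext j
  simp only [Matrix.mulVec, dotProduct, Finset.sum_apply, Matrix.sum_apply, Finset.sum_mul]
  exact Finset.sum_comm

lemma dot_sum' {σ : Type*} (s : Finset σ) (x : ι → ℝ) (v : σ → ι → ℝ) :
    x ⬝ᵥ (∑ i ∈ s, v i) = ∑ i ∈ s, x ⬝ᵥ v i := by
  simp only [dotProduct, Finset.sum_apply, Finset.mul_sum]
  exact Finset.sum_comm

lemma real_conjTranspose (M : Matrix ι κ ℝ) : Mᴴ = Mᵀ := by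
  ext i j; simp [Matrix.conjTranspose_apply]

end Stmt18Aux

open Stmt18Aux

/-- Bounded additive noise: under persistence of excitation, the RLSFF error driven by
noise `w` with `|w_k| ≤ w̄` stays bounded and its limsup is at most `c · w̄` for some
constant `c > 0` (depending on `λ, α, β, S, T, P_{-1}`).
`Pprev k` stands for `P_{k-1}` (so `Pprev 0 = P_{-1}`). -/
theorem stmt18 {n m : ℕ} (T : Matrix (Fin n) (Fin n) ℝ) (hT : T.PosDef)
    (lam : ℝ) (hlam : lam ∈ Set.Ioo (0 : ℝ) 1)
    (S : ℕ) (α β : ℝ) (hα : 0 < α) (hβ : 0 < β)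
    (ψ : ℕ → Matrix (Fin m) (Fin n) ℝ)
    (hPE₁ : ∀ j : ℕ, ((∑ i ∈ range (S + 1), ψ (j + i) * (ψ (j + i))ᵀ)
        - α • (1 : Matrix (Fin m) (Fin m) ℝ)).PosSemidef)
    (hPE₂ : ∀ j : ℕ, (β • (1 : Matrix (Fin m) (Fin m) ℝ)
        - ∑ i ∈ range (S + 1), ψ (j + i) * (ψ (j + i))ᵀ).PosSemidef)
    (Pprev : ℕ → Matrix (Fin m) (Fin m) ℝ) (hP0 : (Pprev 0).PosDef)
    (hPrec : ∀ k, (Pprev (k + 1))⁻¹ = lam • (Pprev k)⁻¹ + ψ k * T⁻¹ * (ψ k)ᵀ)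
    (D : ℕ → Matrix (Fin n) (Fin n) ℝ)
    (hD : ∀ k, D k = lam • T + (ψ k)ᵀ * Pprev k * ψ k)
    (w : ℕ → Fin n → ℝ) (wbar : ℝ) (hwbar : 0 ≤ wbar)
    (hw : ∀ k, Real.sqrt (w k ⬝ᵥ w k) ≤ wbar)
    (θt : ℕ → Fin m → ℝ)
    (hθ : ∀ k, θt (k + 1) = (1 - Pprev k * ψ k * (D k)⁻¹ * (ψ k)ᵀ).mulVec (θt k)
        - (Pprev k * ψ k * (D k)⁻¹).mulVec (w (k + 1))) :
    (∃ M : ℝ, ∀ k, Real.sqrt (θt k ⬝ᵥ θt k) ≤ M) ∧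
      ∃ c : ℝ, 0 < c ∧
        Filter.limsup (fun k => Real.sqrt (θt k ⬝ᵥ θt k)) Filter.atTop ≤ c * wbar := by
  obtain ⟨hlam0, hlam1⟩ := hlam
  -- trivial case m = 0
  rcases Nat.eq_zero_or_pos m with hm | hm
  · subst hm
    have h0 : ∀ k, θt k ⬝ᵥ θt k = 0 := fun k => by simp [dotProduct]
    refine ⟨⟨0, fun k => by rw [h0 k, Real.sqrt_zero]⟩, 1, one_pos, ?_⟩
    have : (fun k => Real.sqrt (θt k ⬝ᵥ θt k)) = fun _ => (0 : ℝ) := by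
      funext k; rw [h0 k, Real.sqrt_zero]
    rw [this, Filter.limsup_const]
    linarith
  have hmne : Nonempty (Fin m) := ⟨⟨0, hm⟩⟩
  -- n = 0 contradicts PE₁
  rcases Nat.eq_zero_or_pos n with hn | hn
  · exfalso
    subst hn
    have hsum : (∑ i ∈ range (S + 1), ψ (0 + i) * (ψ (0 + i))ᵀ) = 0 :=
      Finset.sum_eq_zero fun i _ => by ext a b; simp [Matrix.mul_apply]
    have h := psd_nonneg (hPE₁ 0) (fun _ => 1)
    rw [hsum] at h
    have hx : (fun _ : Fin m => (1:ℝ)) ⬝ᵥ (fun _ => 1) = (m : ℝ) := by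
      simp [dotProduct]
    rw [zero_sub, Matrix.neg_mulVec, dotProduct_neg, Matrix.smul_mulVec,
      Matrix.one_mulVec, dotProduct_smul, smul_eq_mul, hx] at h
    have hmpos : (0:ℝ) < m := by exact_mod_cast hm
    nlinarith
  -- determinant units
  have hTd : IsUnit T.det := (Matrix.isUnit_iff_isUnit_det _).mp hT.isUnit
  -- positive definiteness of Pprev k
  have hPos : ∀ k, (Pprev k).PosDef := by
    intro k
    induction k with
    | zero => exact hP0
    | succ k ih =>
      apply Matrix.posDef_inv_iff.mp
      rw [hPrec k]
      have hpsd : (ψ k * T⁻¹ * (ψ k)ᵀ).PosSemidef := by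
        have := hT.inv.posSemidef.mul_mul_conjTranspose_same (ψ k)
        rwa [real_conjTranspose] at this
      exact (posdef_smul ih.inv hlam0).add_posSemidef hpsd
  have hPd : ∀ k, IsUnit (Pprev k).det := fun k => (Matrix.isUnit_iff_isUnit_det _).mp (hPos k).isUnit
  have hDpos : ∀ k, (D k).PosDef := by
    intro k
    rw [hD k]
    have hpsd : ((ψ k)ᵀ * Pprev k * ψ k).PosSemidef := by
      have := (hPos k).posSemidef.conjTranspose_mul_mul_same (ψ k)
      rwa [real_conjTranspose] at this
    exact (posdef_smul hT hlam0).add_posSemidef hpsd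
  have hDd : ∀ k, IsUnit (D k).det := fun k => (Matrix.isUnit_iff_isUnit_det _).mp (hDpos k).isUnit
  -- key matrix identities
  have idA : ∀ k, (Pprev (k+1))⁻¹ * (Pprev k * ψ k * (D k)⁻¹) = ψ k * T⁻¹ := by
    intro k
    have hPinv : (Pprev k)⁻¹ * Pprev k = 1 := Matrix.nonsing_inv_mul _ (hPd k)
    have hTinv2 : T⁻¹ * T = 1 := Matrix.nonsing_inv_mul _ hTd
    have hDinv : D k * (D k)⁻¹ = 1 := Matrix.mul_nonsing_inv _ (hDd k)
    rw [hPrec k, Matrix.add_mul, Matrix.smul_mul]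
    have e1 : (Pprev k)⁻¹ * (Pprev k * ψ k * (D k)⁻¹) = ψ k * (D k)⁻¹ := by
      rw [← Matrix.mul_assoc, ← Matrix.mul_assoc, hPinv, Matrix.one_mul]
    rw [e1]
    have e2 : ψ k * T⁻¹ * (ψ k)ᵀ * (Pprev k * ψ k * (D k)⁻¹)
        = ψ k * T⁻¹ * ((ψ k)ᵀ * Pprev k * ψ k) * (D k)⁻¹ := by
      simp only [Matrix.mul_assoc]
    rw [e2]
    have e3 : lam • (ψ k * (D k)⁻¹) = ψ k * T⁻¹ * (lam • T) * (D k)⁻¹ := by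
      rw [Matrix.mul_smul, Matrix.mul_assoc, hTinv2, Matrix.mul_one, Matrix.smul_mul]
    rw [e3, ← Matrix.add_mul, ← Matrix.mul_add, ← hD k, Matrix.mul_assoc, hDinv, Matrix.mul_one]
  have idB : ∀ k, (Pprev (k+1))⁻¹ * (1 - Pprev k * ψ k * (D k)⁻¹ * (ψ k)ᵀ)
      = lam • (Pprev k)⁻¹ := by
    intro k
    rw [Matrix.mul_sub, Matrix.mul_one]
    have e : (Pprev (k+1))⁻¹ * (Pprev k * ψ k * (D k)⁻¹ * (ψ k)ᵀ) = ψ k * T⁻¹ * (ψ k)ᵀ := by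
      rw [← Matrix.mul_assoc, idA k]
    rw [e, hPrec k, add_sub_cancel_right]
  -- the z recursion
  have hz : ∀ k, (Pprev (k+1))⁻¹ *ᵥ θt (k+1)
      = lam • ((Pprev k)⁻¹ *ᵥ θt k) - (ψ k * T⁻¹) *ᵥ w (k+1) := by
    intro k
    rw [hθ k, Matrix.mulVec_sub, Matrix.mulVec_mulVec, Matrix.mulVec_mulVec, idB k, idA k,
      Matrix.smul_mulVec]
  -- quadratic form of ψψᵀ
  have hquad : ∀ (j : ℕ) (x : Fin m → ℝ),
      x ⬝ᵥ (ψ j * (ψ j)ᵀ) *ᵥ x = ((ψ j)ᵀ *ᵥ x) ⬝ᵥ ((ψ j)ᵀ *ᵥ x) := by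
    intro j x
    rw [← Matrix.mulVec_mulVec, dot_transpose]
  -- operator bound for ψ k from PE₂
  have hform : ∀ (k : ℕ) (x : Fin m → ℝ),
      ((ψ k)ᵀ *ᵥ x) ⬝ᵥ ((ψ k)ᵀ *ᵥ x) ≤ β * (x ⬝ᵥ x) := by
    intro k x
    have h := psd_nonneg (hPE₂ k) x
    rw [Matrix.sub_mulVec, dotProduct_sub, Matrix.smul_mulVec, Matrix.one_mulVec,
      dotProduct_smul, smul_eq_mul, sub_nonneg, sum_mulVec', dot_sum'] at h
    refine le_trans ?_ h
    have h0 : (0:ℕ) ∈ range (S+1) := Finset.mem_range.mpr (Nat.succ_pos S)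
    have := Finset.single_le_sum (f := fun i => x ⬝ᵥ (ψ (k+i) * (ψ (k+i))ᵀ) *ᵥ x)
      (fun i _ => by rw [hquad]; exact dot_self_nonneg _) h0
    simpa [hquad] using this
  have hψop : ∀ (k : ℕ) (u : Fin n → ℝ),
      Real.sqrt ((ψ k *ᵥ u) ⬝ᵥ (ψ k *ᵥ u)) ≤ Real.sqrt β * Real.sqrt (u ⬝ᵥ u) := by
    intro k u
    set x := ψ k *ᵥ u with hxdef
    have h1 : x ⬝ᵥ x ≤ Real.sqrt (β * (x ⬝ᵥ x)) * Real.sqrt (u ⬝ᵥ u) := by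
      calc x ⬝ᵥ x = ((ψ k)ᵀ *ᵥ x) ⬝ᵥ u := by rw [hxdef, dot_transpose]
        _ ≤ Real.sqrt (((ψ k)ᵀ *ᵥ x) ⬝ᵥ ((ψ k)ᵀ *ᵥ x)) * Real.sqrt (u ⬝ᵥ u) := cs _ _
        _ ≤ Real.sqrt (β * (x ⬝ᵥ x)) * Real.sqrt (u ⬝ᵥ u) := by
            apply mul_le_mul_of_nonneg_right (Real.sqrt_le_sqrt (hform k x)) (Real.sqrt_nonneg _)
    rw [Real.sqrt_mul hβ.le] at h1
    rcases eq_or_lt_of_le (Real.sqrt_nonneg (x ⬝ᵥ x)) with h0 | h0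
    · rw [← h0]; positivity
    · apply le_of_mul_le_mul_right _ h0
      have hxx : Real.sqrt (x ⬝ᵥ x) * Real.sqrt (x ⬝ᵥ x) = x ⬝ᵥ x :=
        Real.mul_self_sqrt (dot_self_nonneg _)
      nlinarith [h1, Real.sqrt_nonneg β, Real.sqrt_nonneg (u ⬝ᵥ u)]
  -- noise bound
  set CTi : ℝ := Real.sqrt (∑ i, ∑ j, (T⁻¹ i j) ^ 2) with hCTi
  have hCTi0 : 0 ≤ CTi := Real.sqrt_nonneg _
  set B : ℝ := Real.sqrt β * (CTi * wbar) with hBdef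
  have hB0 : 0 ≤ B := by positivity
  have hnoise : ∀ k, Real.sqrt (((ψ k * T⁻¹) *ᵥ w (k+1)) ⬝ᵥ ((ψ k * T⁻¹) *ᵥ w (k+1))) ≤ B := by
    intro k
    rw [← Matrix.mulVec_mulVec]
    calc Real.sqrt ((ψ k *ᵥ (T⁻¹ *ᵥ w (k+1))) ⬝ᵥ (ψ k *ᵥ (T⁻¹ *ᵥ w (k+1))))
        ≤ Real.sqrt β * Real.sqrt ((T⁻¹ *ᵥ w (k+1)) ⬝ᵥ (T⁻¹ *ᵥ w (k+1))) := hψop k _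
      _ ≤ Real.sqrt β * (CTi * Real.sqrt (w (k+1) ⬝ᵥ w (k+1))) := by
          apply mul_le_mul_of_nonneg_left _ (Real.sqrt_nonneg β)
          exact crude_bound T⁻¹ (w (k+1))
      _ ≤ Real.sqrt β * (CTi * wbar) := by
          apply mul_le_mul_of_nonneg_left _ (Real.sqrt_nonneg β)
          exact mul_le_mul_of_nonneg_left (hw (k+1)) hCTi0
  -- lower bound on the quadratic form of T⁻¹
  set cT : ℝ := Real.sqrt (∑ i, ∑ j, (T i j) ^ 2) with hcTdef
  have hcT : 0 < cT := by
    have i0 : Fin n := ⟨0, hn⟩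
    set e : Fin n → ℝ := fun j => if j = i0 then (1:ℝ) else 0 with hedef
    have hx : e ≠ 0 := by
      intro hc
      have := congrFun hc i0
      simp [hedef] at this
    have hTii : 0 < T i0 i0 := by
      have h := hT.dotProduct_mulVec_pos hx
      simp only [star_trivial] at h
      have he : e ⬝ᵥ T *ᵥ e = T i0 i0 := by
        simp [hedef, dotProduct, Matrix.mulVec, ite_mul, mul_ite]
      rwa [he] at h
    apply Real.sqrt_pos.mpr
    apply Finset.sum_pos' (fun _ _ => Finset.sum_nonneg fun _ _ => sq_nonneg _)
    exact ⟨i0, Finset.mem_univ i0,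
      Finset.sum_pos' (fun _ _ => sq_nonneg _) ⟨i0, Finset.mem_univ i0, by positivity⟩⟩
  have hTub : ∀ u : Fin n → ℝ, u ⬝ᵥ T *ᵥ u ≤ cT * (u ⬝ᵥ u) := by
    intro u
    calc u ⬝ᵥ T *ᵥ u ≤ Real.sqrt (u ⬝ᵥ u) * Real.sqrt ((T *ᵥ u) ⬝ᵥ (T *ᵥ u)) := cs _ _
      _ ≤ Real.sqrt (u ⬝ᵥ u) * (cT * Real.sqrt (u ⬝ᵥ u)) :=
          mul_le_mul_of_nonneg_left (crude_bound T u) (Real.sqrt_nonneg _)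
      _ = cT * (Real.sqrt (u ⬝ᵥ u) * Real.sqrt (u ⬝ᵥ u)) := by ring
      _ = cT * (u ⬝ᵥ u) := by rw [Real.mul_self_sqrt (dot_self_nonneg u)]
  have hTinv_lb : ∀ u : Fin n → ℝ, (1/cT) * (u ⬝ᵥ u) ≤ u ⬝ᵥ T⁻¹ *ᵥ u := by
    intro u
    have hinvT : T⁻¹ *ᵥ (T *ᵥ u) = u := by
      rw [Matrix.mulVec_mulVec, Matrix.nonsing_inv_mul _ hTd, Matrix.one_mulVec]
    have h5 := psd_cs hT.inv.posSemidef u (T *ᵥ u)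
    rw [hinvT, dotProduct_comm (T *ᵥ u) u] at h5
    have hq0 : 0 ≤ u ⬝ᵥ T⁻¹ *ᵥ u := psd_nonneg hT.inv.posSemidef u
    rcases eq_or_lt_of_le (dot_self_nonneg u) with hd | hd
    · rw [← hd]; simpa using hq0
    · have h7 : (u ⬝ᵥ u) * (u ⬝ᵥ u) ≤ ((u ⬝ᵥ T⁻¹ *ᵥ u) * cT) * (u ⬝ᵥ u) := by
        nlinarith [h5, hTub u, hq0]
      have h8 : u ⬝ᵥ u ≤ (u ⬝ᵥ T⁻¹ *ᵥ u) * cT := le_of_mul_le_mul_right h7 hd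
      rw [one_div, inv_mul_le_iff₀ hcT]
      linarith
  -- growth of the quadratic form of (Pprev k)⁻¹ under PE
  have hq0 : ∀ (k : ℕ) (x : Fin m → ℝ), 0 ≤ x ⬝ᵥ (Pprev k)⁻¹ *ᵥ x := fun k x =>
    psd_nonneg (hPos k).inv.posSemidef x
  have hqrec : ∀ (k : ℕ) (x : Fin m → ℝ), x ⬝ᵥ (Pprev (k+1))⁻¹ *ᵥ x
      = lam * (x ⬝ᵥ (Pprev k)⁻¹ *ᵥ x)
        + ((ψ k)ᵀ *ᵥ x) ⬝ᵥ (T⁻¹ *ᵥ ((ψ k)ᵀ *ᵥ x)) := by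
    intro k x
    rw [hPrec k, Matrix.add_mulVec, dotProduct_add, Matrix.smul_mulVec,
      dotProduct_smul, smul_eq_mul]
    congr 1
    rw [← Matrix.mulVec_mulVec, ← Matrix.mulVec_mulVec, dot_transpose]
  have growth : ∀ (j t : ℕ) (x : Fin m → ℝ),
      (1/cT) * ∑ i ∈ range t, lam ^ (t-1-i)
          * (((ψ (j+i))ᵀ *ᵥ x) ⬝ᵥ ((ψ (j+i))ᵀ *ᵥ x))
        ≤ x ⬝ᵥ (Pprev (j+t))⁻¹ *ᵥ x := by
    intro j t x
    induction t with
    | zero => simpa using hq0 j x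
    | succ t ih =>
      have hsum : ∑ i ∈ range (t+1), lam ^ (t+1-1-i)
            * (((ψ (j+i))ᵀ *ᵥ x) ⬝ᵥ ((ψ (j+i))ᵀ *ᵥ x))
          = lam * (∑ i ∈ range t, lam ^ (t-1-i)
            * (((ψ (j+i))ᵀ *ᵥ x) ⬝ᵥ ((ψ (j+i))ᵀ *ᵥ x)))
            + (((ψ (j+t))ᵀ *ᵥ x) ⬝ᵥ ((ψ (j+t))ᵀ *ᵥ x)) := by
        rw [Finset.sum_range_succ, Finset.mul_sum]
        congr 1
        · apply Finset.sum_congr rfl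
          intro i hi
          have hi' := Finset.mem_range.mp hi
          have he : t + 1 - 1 - i = (t - 1 - i) + 1 := by omega
          rw [he, pow_succ]
          ring
        · have he : t + 1 - 1 - t = 0 := by omega
          rw [he, pow_zero, one_mul]
      have hstep := hqrec (j+t) x
      have haux : j + t + 1 = j + (t + 1) := by omega
      rw [haux] at hstep
      calc (1/cT) * ∑ i ∈ range (t+1), lam ^ (t+1-1-i)
            * (((ψ (j+i))ᵀ *ᵥ x) ⬝ᵥ ((ψ (j+i))ᵀ *ᵥ x))
          = lam * ((1/cT) * ∑ i ∈ range t, lam ^ (t-1-i)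
              * (((ψ (j+i))ᵀ *ᵥ x) ⬝ᵥ ((ψ (j+i))ᵀ *ᵥ x)))
            + (1/cT) * (((ψ (j+t))ᵀ *ᵥ x) ⬝ᵥ ((ψ (j+t))ᵀ *ᵥ x)) := by
            rw [hsum]; ring
        _ ≤ lam * (x ⬝ᵥ (Pprev (j+t))⁻¹ *ᵥ x)
            + ((ψ (j+t))ᵀ *ᵥ x) ⬝ᵥ (T⁻¹ *ᵥ ((ψ (j+t))ᵀ *ᵥ x)) := by
            apply add_le_add
            · exact mul_le_mul_of_nonneg_left ih hlam0.le
            · exact hTinv_lb _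
        _ = x ⬝ᵥ (Pprev (j+(t+1)))⁻¹ *ᵥ x := hstep.symm
  -- uniform lower bound for k ≥ S+1
  set μ : ℝ := (1/cT) * (lam ^ S * α) with hμdef
  have hμpos : 0 < μ := by
    apply mul_pos (one_div_pos.mpr hcT)
    exact mul_pos (pow_pos hlam0 S) hα
  have hμfinal : ∀ (j : ℕ) (x : Fin m → ℝ),
      μ * (x ⬝ᵥ x) ≤ x ⬝ᵥ (Pprev (j+(S+1)))⁻¹ *ᵥ x := by
    intro j x
    have hg := growth j (S+1) x
    have hPE : α * (x ⬝ᵥ x)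
        ≤ ∑ i ∈ range (S+1), (((ψ (j+i))ᵀ *ᵥ x) ⬝ᵥ ((ψ (j+i))ᵀ *ᵥ x)) := by
      have h := psd_nonneg (hPE₁ j) x
      rw [Matrix.sub_mulVec, dotProduct_sub, Matrix.smul_mulVec, Matrix.one_mulVec,
        dotProduct_smul, smul_eq_mul, sub_nonneg, sum_mulVec', dot_sum'] at h
      simpa [hquad] using h
    calc μ * (x ⬝ᵥ x) = (1/cT) * (lam^S * (α * (x ⬝ᵥ x))) := by rw [hμdef]; ring
      _ ≤ (1/cT) * (lam^S * ∑ i ∈ range (S+1),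
            (((ψ (j+i))ᵀ *ᵥ x) ⬝ᵥ ((ψ (j+i))ᵀ *ᵥ x))) := by
          apply mul_le_mul_of_nonneg_left _ (le_of_lt (one_div_pos.mpr hcT))
          exact mul_le_mul_of_nonneg_left hPE (pow_nonneg hlam0.le S)
      _ = (1/cT) * ∑ i ∈ range (S+1),
            lam^S * (((ψ (j+i))ᵀ *ᵥ x) ⬝ᵥ ((ψ (j+i))ᵀ *ᵥ x)) := by
          rw [Finset.mul_sum]
      _ ≤ (1/cT) * ∑ i ∈ range (S+1),
            lam^(S+1-1-i) * (((ψ (j+i))ᵀ *ᵥ x) ⬝ᵥ ((ψ (j+i))ᵀ *ᵥ x)) := by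
          apply mul_le_mul_of_nonneg_left _ (le_of_lt (one_div_pos.mpr hcT))
          apply Finset.sum_le_sum
          intro i hi
          apply mul_le_mul_of_nonneg_right _ (dot_self_nonneg _)
          have he : S + 1 - 1 - i = S - i := by omega
          rw [he]
          exact pow_le_pow_of_le_one hlam0.le hlam1.le (Nat.sub_le S i)
      _ ≤ x ⬝ᵥ (Pprev (j+(S+1)))⁻¹ *ᵥ x := hg
  -- norm of z
  set N : ℕ → ℝ := fun k =>
    Real.sqrt (((Pprev k)⁻¹ *ᵥ θt k) ⬝ᵥ ((Pprev k)⁻¹ *ᵥ θt k)) with hNdef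
  have hN0 : ∀ k, 0 ≤ N k := fun k => Real.sqrt_nonneg _
  have hconv : ∀ k, S + 1 ≤ k → Real.sqrt (θt k ⬝ᵥ θt k) ≤ (1/μ) * N k := by
    intro k hk
    obtain ⟨j, rfl⟩ : ∃ j, k = j + (S+1) := ⟨k - (S+1), by omega⟩
    have h1 := hμfinal j (θt (j+(S+1)))
    have h2 : θt (j+(S+1)) ⬝ᵥ ((Pprev (j+(S+1)))⁻¹ *ᵥ θt (j+(S+1)))
        ≤ Real.sqrt (θt (j+(S+1)) ⬝ᵥ θt (j+(S+1))) * N (j+(S+1)) := by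
      rw [hNdef]
      exact cs _ _
    set s := Real.sqrt (θt (j+(S+1)) ⬝ᵥ θt (j+(S+1))) with hs
    have hs2 : s * s = θt (j+(S+1)) ⬝ᵥ θt (j+(S+1)) := Real.mul_self_sqrt (dot_self_nonneg _)
    have hsnn : 0 ≤ s := Real.sqrt_nonneg _
    rcases eq_or_lt_of_le hsnn with h0 | h0
    · rw [← h0]
      exact mul_nonneg (le_of_lt (one_div_pos.mpr hμpos)) (hN0 _)
    · have hms : (μ * s) * s ≤ N (j+(S+1)) * s := by nlinarith [le_trans h1 h2]
      have hms2 := le_of_mul_le_mul_right hms h0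
      have : s ≤ N (j+(S+1)) / μ := (le_div_iff₀ hμpos).mpr (by linarith)
      calc s ≤ N (j+(S+1)) / μ := this
        _ = (1/μ) * N (j+(S+1)) := by ring
  have hNrec : ∀ k, N (k+1) ≤ lam * N k + B := by
    intro k
    have h := hz k
    calc N (k+1)
        = Real.sqrt ((lam • ((Pprev k)⁻¹ *ᵥ θt k) - (ψ k * T⁻¹) *ᵥ w (k+1)) ⬝ᵥ
            (lam • ((Pprev k)⁻¹ *ᵥ θt k) - (ψ k * T⁻¹) *ᵥ w (k+1))) := by
          rw [hNdef]; simp only []; rw [h]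
      _ = Real.sqrt ((lam • ((Pprev k)⁻¹ *ᵥ θt k) + -((ψ k * T⁻¹) *ᵥ w (k+1))) ⬝ᵥ
            (lam • ((Pprev k)⁻¹ *ᵥ θt k) + -((ψ k * T⁻¹) *ᵥ w (k+1)))) := by
          rw [sub_eq_add_neg]
      _ ≤ Real.sqrt ((lam • ((Pprev k)⁻¹ *ᵥ θt k)) ⬝ᵥ (lam • ((Pprev k)⁻¹ *ᵥ θt k)))
          + Real.sqrt ((-((ψ k * T⁻¹) *ᵥ w (k+1))) ⬝ᵥ (-((ψ k * T⁻¹) *ᵥ w (k+1)))) :=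
          sqrt_dot_add _ _
      _ = |lam| * N k
          + Real.sqrt (((ψ k * T⁻¹) *ᵥ w (k+1)) ⬝ᵥ ((ψ k * T⁻¹) *ᵥ w (k+1))) := by
          rw [sqrt_dot_smul, sqrt_dot_neg, hNdef]
      _ ≤ lam * N k + B := by
          rw [abs_of_pos hlam0]
          exact add_le_add_right (hnoise k) _
  have hNbound : ∀ k, N k ≤ lam ^ k * N 0 + B / (1 - lam) := by
    intro k
    have hdiv0 : 0 ≤ B / (1 - lam) := div_nonneg hB0 (by linarith)
    induction k with
    | zero => rw [pow_zero, one_mul]; linarith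
    | succ k ih =>
      have h := hNrec k
      have h2 : lam * N k ≤ lam * (lam^k * N 0 + B/(1-lam)) :=
        mul_le_mul_of_nonneg_left ih hlam0.le
      have he : lam * (lam^k * N 0 + B/(1-lam)) + B = lam^(k+1) * N 0 + B/(1-lam) := by
        have hne : (1:ℝ) - lam ≠ 0 := by intro hc; linarith
        field_simp
        ring
      linarith
  constructor
  · -- boundedness
    refine ⟨(1/μ) * (N 0 + B/(1-lam)) + ∑ k ∈ range (S+1), Real.sqrt (θt k ⬝ᵥ θt k), ?_⟩
    intro k
    have hsum0 : 0 ≤ ∑ k ∈ range (S+1), Real.sqrt (θt k ⬝ᵥ θt k) :=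
      Finset.sum_nonneg fun _ _ => Real.sqrt_nonneg _
    have hdiv0 : 0 ≤ B / (1 - lam) := div_nonneg hB0 (by linarith)
    have hfirst0 : 0 ≤ (1/μ) * (N 0 + B/(1-lam)) :=
      mul_nonneg (le_of_lt (one_div_pos.mpr hμpos)) (by linarith [hN0 0])
    by_cases hk : S + 1 ≤ k
    · have h1 := hconv k hk
      have h2 := hNbound k
      have h3 : lam ^ k * N 0 ≤ N 0 := by
        have hp1 : lam ^ k ≤ 1 := pow_le_one₀ hlam0.le hlam1.le
        nlinarith [hN0 0]
      have h4 : Real.sqrt (θt k ⬝ᵥ θt k) ≤ (1/μ) * (N 0 + B/(1-lam)) := by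
        calc Real.sqrt (θt k ⬝ᵥ θt k) ≤ (1/μ) * N k := h1
          _ ≤ (1/μ) * (N 0 + B/(1-lam)) := by
              apply mul_le_mul_of_nonneg_left _ (le_of_lt (one_div_pos.mpr hμpos))
              linarith
      linarith
    · push_neg at hk
      have hmem : k ∈ range (S+1) := Finset.mem_range.mpr hk
      have := Finset.single_le_sum (f := fun k => Real.sqrt (θt k ⬝ᵥ θt k))
        (fun _ _ => Real.sqrt_nonneg _) hmem
      linarith
  · -- limsup bound
    set c0 : ℝ := (1/μ) * (Real.sqrt β * CTi / (1 - lam)) with hc0def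
    have hc00 : 0 ≤ c0 := by
      apply mul_nonneg (le_of_lt (one_div_pos.mpr hμpos))
      exact div_nonneg (mul_nonneg (Real.sqrt_nonneg _) hCTi0) (by linarith)
    refine ⟨c0 + 1, by linarith, ?_⟩
    have htend : Tendsto (fun k : ℕ => (1/μ) * (lam ^ k * N 0 + B/(1-lam))) atTop
        (nhds ((1/μ) * ((0:ℝ) * N 0 + B/(1-lam)))) := by
      apply Filter.Tendsto.const_mul
      apply Filter.Tendsto.add_const
      apply Filter.Tendsto.mul_const
      exact tendsto_pow_atTop_nhds_zero_of_lt_one hlam0.le hlam1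
    have hev : ∀ᶠ k in atTop,
        Real.sqrt (θt k ⬝ᵥ θt k) ≤ (1/μ) * (lam ^ k * N 0 + B/(1-lam)) := by
      filter_upwards [Filter.eventually_ge_atTop (S+1)] with k hk
      exact (hconv k hk).trans
        (mul_le_mul_of_nonneg_left (hNbound k) (le_of_lt (one_div_pos.mpr hμpos)))
    have hls : limsup (fun k => Real.sqrt (θt k ⬝ᵥ θt k)) atTop
        ≤ (1/μ) * ((0:ℝ) * N 0 + B/(1-lam)) := by
      have h1 := Filter.limsup_le_limsup hev
        (Filter.isCoboundedUnder_le_of_le atTop (fun k => Real.sqrt_nonneg _))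
        htend.isBoundedUnder_le
      rwa [htend.limsup_eq] at h1
    have heq : (1/μ) * ((0:ℝ) * N 0 + B/(1-lam)) = c0 * wbar := by
      rw [hc0def, hBdef]; ring
    rw [heq] at hls
    calc limsup (fun k => Real.sqrt (θt k ⬝ᵥ θt k)) atTop ≤ c0 * wbar := hls
      _ ≤ (c0 + 1) * wbar := by nlinarith
end
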